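/- The variational identity implies the AP differential identity: let λ_{iμ} be a continuously differentiable tetrad on ℝⁿ, b a real parameter, E^μ_ν a differentiable mixed tensor field, and define J_i^μ := −E^μ_α λ_i^α. Suppose that at every point and for every ν the identity E^μ_{ν∥⁻μ} + λ_{iμ∥⁺ν} J_i^μ = 0 holds (summation over i and μ), where E^μ_{ν∥⁻μ} := ∂_μ E^μ_ν − E^μ_α ∇^α_{μν} + E^α_ν ∇^μ_{μα} and λ_{iμ∥⁺ν} := ∂_ν λ_{iμ} − λ_{iα} ∇^α_{μν}. Then at every point and for every ν one has E^μ_{ν|⁻μ} := ∂_μ E^μ_ν − E^μ_α Γ^α_{μν} + E^α_ν Γ^μ_{μα} = 0, i.e., the contracted covariant derivative of E with respect to the dual of the Weitzenböck connection vanishes identically. -/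

import Mathlib

open scoped BigOperators

noncomputable section

/-- A point of ℝⁿ. -/
abbrev Pt (n : ℕ) := Fin n → ℝ
/-- A field of doubly-indexed components, e.g. a metric `g x μ ν` or a mixed tensor `E x μ ν`. -/
abbrev Tensor2 (n : ℕ) := Pt n → Fin n → Fin n → ℝ
/-- A field of connection coefficients `N x α μ ν = N^α_{μν}`. -/
abbrev Conn (n : ℕ) := Pt n → Fin n → Fin n → Fin n → ℝ

/-- Partial derivative `∂_μ f` at `x`. -/
noncomputable def pd {n : ℕ} (f : Pt n → ℝ) (μ : Fin n) (x : Pt n) : ℝ :=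
  fderiv ℝ f x (Pi.single μ 1)

/-- Christoffel symbols `{^α_{μν}} = (1/2) g^{ασ}(∂_ν g_{μσ} + ∂_μ g_{νσ} − ∂_σ g_{μν})`. -/
noncomputable def christoffel {n : ℕ} (g ginv : Tensor2 n) : Conn n := fun x α μ ν =>
  (1/2) * ∑ σ, ginv x α σ *
    (pd (fun y => g y μ σ) ν x + pd (fun y => g y ν σ) μ x - pd (fun y => g y μ ν) σ x)

/-- Contracted covariant derivative of `E` with respect to the dual (transposed) connection of `N`:
`E^μ_{ν∘μ} = ∂_μ E^μ_ν − E^μ_α N^α_{μν} + E^α_ν N^μ_{μα}` (summed over `μ` and `α`). -/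
noncomputable def covDivDual {n : ℕ} (N : Conn n) (E : Tensor2 n) (ν : Fin n) (x : Pt n) : ℝ :=
  (∑ μ, pd (fun y => E y μ ν) μ x)
    - (∑ μ, ∑ α, E x μ α * N x α μ ν)
    + (∑ μ, ∑ α, E x α ν * N x μ μ α)

/-- The metric `g_{μν} = λ_{iμ} λ_{iν}` associated with a tetrad `lam x i μ = λ_{iμ}`. -/
noncomputable def tetMetric {n : ℕ} (lam : Pt n → Fin n → Fin n → ℝ) : Tensor2 n :=
  fun x μ ν => ∑ i, lam x i μ * lam x i ν

/-- The inverse metric `g^{μν} = λ_i^μ λ_i^ν` built from the inverse tetrad `laminv x i μ = λ_i^μ`. -/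
noncomputable def tetMetricInv {n : ℕ} (laminv : Pt n → Fin n → Fin n → ℝ) : Tensor2 n :=
  fun x μ ν => ∑ i, laminv x i μ * laminv x i ν

/-- The Weitzenböck connection `Γ^α_{μν} = λ_i^α ∂_ν λ_{iμ}`. -/
noncomputable def weitzenbock {n : ℕ} (lam laminv : Pt n → Fin n → Fin n → ℝ) : Conn n :=
  fun x α μ ν => ∑ i, laminv x i α * pd (fun y => lam y i μ) ν x

/-- The contortion `γ^α_{μν} = Γ^α_{μν} − {^α_{μν}}`. -/
noncomputable def contortion {n : ℕ} (lam laminv : Pt n → Fin n → Fin n → ℝ) : Conn n :=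
  fun x α μ ν => weitzenbock lam laminv x α μ ν
    - christoffel (tetMetric lam) (tetMetricInv laminv) x α μ ν

/-! ### Auxiliary lemmas -/

lemma pd_fin_sum {n : ℕ} (f : Fin n → Pt n → ℝ) (μ : Fin n) (x : Pt n)
    (hf : ∀ i, DifferentiableAt ℝ (f i) x) :
    pd (fun y => ∑ i, f i y) μ x = ∑ i, pd (f i) μ x := by
  unfold pd
  rw [fderiv_fun_sum (fun i _ => hf i)]
  simp

lemma pd_mul {n : ℕ} (f g : Pt n → ℝ) (μ : Fin n) (x : Pt n)
    (hf : DifferentiableAt ℝ f x) (hg : DifferentiableAt ℝ g x) :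
    pd (fun y => f y * g y) μ x = pd f μ x * g x + f x * pd g μ x := by
  unfold pd
  rw [fderiv_fun_mul hf hg]
  simp
  ring

lemma pd_tetMetric {n : ℕ} (lam : Pt n → Fin n → Fin n → ℝ)
    (hlam : ∀ i μ, ContDiff ℝ 1 (fun x => lam x i μ)) (μ σ α : Fin n) (x : Pt n) :
    pd (fun y => tetMetric lam y μ σ) α x
      = ∑ i, (pd (fun y => lam y i μ) α x * lam x i σ
            + lam x i μ * pd (fun y => lam y i σ) α x) := by
  have h : ∀ i ν, DifferentiableAt ℝ (fun y => lam y i ν) x :=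
    fun i ν => ((hlam i ν).differentiable one_ne_zero).differentiableAt
  unfold tetMetric
  rw [pd_fin_sum (fun i y => lam y i μ * lam y i σ) _ _ (fun i => (h i μ).mul (h i σ))]
  exact Finset.sum_congr rfl fun i _ => pd_mul _ _ _ _ (h i μ) (h i σ)

lemma contract_ginv {n : ℕ} (lam laminv : Pt n → Fin n → Fin n → ℝ)
    (hlam_inv' : ∀ x i j, (∑ μ, lam x i μ * laminv x j μ) = if i = j then (1:ℝ) else 0)
    (x : Pt n) (i μ : Fin n) :
    (∑ σ, tetMetricInv laminv x μ σ * lam x i σ) = laminv x i μ := by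
  simp only [tetMetricInv, Finset.sum_mul]
  rw [Finset.sum_comm]
  have h : ∀ j, (∑ σ, laminv x j μ * laminv x j σ * lam x i σ)
      = laminv x j μ * (if i = j then (1:ℝ) else 0) := by
    intro j
    rw [← hlam_inv' x i j, Finset.mul_sum]
    exact Finset.sum_congr rfl fun σ _ => by ring
  rw [Finset.sum_congr rfl fun j _ => h j]
  simp

lemma alg_delta {n : ℕ} (L Li : Fin n → Fin n → ℝ)
    (hdelta : ∀ a b, (∑ i, L i a * Li i b) = if a = b then (1:ℝ) else 0)
    (c : Fin n → Fin n → ℝ) :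
    (∑ i, ∑ α, ∑ β, L i α * Li i β * c α β) = ∑ α, c α α := by
  rw [Finset.sum_comm]
  refine Finset.sum_congr rfl fun α _ => ?_
  rw [Finset.sum_comm]
  have h : ∀ β, (∑ i, L i α * Li i β * c α β) = (if α = β then (1:ℝ) else 0) * c α β := by
    intro β
    rw [← hdelta α β, Finset.sum_mul]
  rw [Finset.sum_congr rfl fun β _ => h β]
  simp

lemma alg_trace {n : ℕ} (G L Li : Fin n → Fin n → ℝ) (Dm : Fin n → Fin n → Fin n → ℝ)
    (α : Fin n)
    (hGsym : ∀ a c, G a c = G c a)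
    (hcontr : ∀ i μ, (∑ σ, G μ σ * L i σ) = Li i μ) :
    (∑ μ, (1/2) * ∑ σ, G μ σ *
        ((∑ i, (Dm i μ α * L i σ + L i μ * Dm i σ α))
          + (∑ i, (Dm i α μ * L i σ + L i α * Dm i σ μ))
          - (∑ i, (Dm i μ σ * L i α + L i μ * Dm i α σ))))
      = ∑ μ, ∑ i, Li i μ * Dm i μ α := by
  have h23 : (∑ μ, ∑ σ, G μ σ * ∑ i, (Dm i μ σ * L i α + L i μ * Dm i α σ))
           = ∑ μ, ∑ σ, G μ σ * ∑ i, (Dm i α μ * L i σ + L i α * Dm i σ μ) := by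
    rw [Finset.sum_comm]
    refine Finset.sum_congr rfl fun a _ => Finset.sum_congr rfl fun b _ => ?_
    rw [hGsym b a]
    congr 1
    exact Finset.sum_congr rfl fun i _ => by ring
  have step1 : (∑ μ, (1/2) * ∑ σ, G μ σ *
        ((∑ i, (Dm i μ α * L i σ + L i μ * Dm i σ α))
          + (∑ i, (Dm i α μ * L i σ + L i α * Dm i σ μ))
          - (∑ i, (Dm i μ σ * L i α + L i μ * Dm i α σ))))
      = (1/2) * ((∑ μ, ∑ σ, G μ σ * ∑ i, (Dm i μ α * L i σ + L i μ * Dm i σ α))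
          + (∑ μ, ∑ σ, G μ σ * ∑ i, (Dm i α μ * L i σ + L i α * Dm i σ μ))
          - (∑ μ, ∑ σ, G μ σ * ∑ i, (Dm i μ σ * L i α + L i μ * Dm i α σ))) := by
    rw [← Finset.mul_sum]
    congr 1
    rw [← Finset.sum_add_distrib, ← Finset.sum_sub_distrib]
    refine Finset.sum_congr rfl fun μ _ => ?_
    rw [← Finset.sum_add_distrib, ← Finset.sum_sub_distrib]
    exact Finset.sum_congr rfl fun σ _ => by ring
  rw [step1, h23]
  have hT1 : (∑ μ, ∑ σ, G μ σ * ∑ i, (Dm i μ α * L i σ + L i μ * Dm i σ α))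
      = 2 * ∑ μ, ∑ i, Li i μ * Dm i μ α := by
    have split : (∑ μ, ∑ σ, G μ σ * ∑ i, (Dm i μ α * L i σ + L i μ * Dm i σ α))
        = (∑ μ, ∑ σ, ∑ i, G μ σ * (Dm i μ α * L i σ))
          + (∑ μ, ∑ σ, ∑ i, G μ σ * (L i μ * Dm i σ α)) := by
      rw [← Finset.sum_add_distrib]
      refine Finset.sum_congr rfl fun μ _ => ?_
      rw [← Finset.sum_add_distrib]
      refine Finset.sum_congr rfl fun σ _ => ?_
      rw [Finset.mul_sum, ← Finset.sum_add_distrib]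
      exact Finset.sum_congr rfl fun i _ => by ring
    have hVU : (∑ μ, ∑ σ, ∑ i, G μ σ * (L i μ * Dm i σ α))
        = ∑ μ, ∑ σ, ∑ i, G μ σ * (Dm i μ α * L i σ) := by
      rw [Finset.sum_comm]
      refine Finset.sum_congr rfl fun a _ => Finset.sum_congr rfl fun b _ =>
        Finset.sum_congr rfl fun i _ => ?_
      rw [hGsym b a]; ring
    have hU : (∑ μ, ∑ σ, ∑ i, G μ σ * (Dm i μ α * L i σ))
        = ∑ μ, ∑ i, Li i μ * Dm i μ α := by
      refine Finset.sum_congr rfl fun μ _ => ?_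
      rw [Finset.sum_comm]
      refine Finset.sum_congr rfl fun i _ => ?_
      calc (∑ σ, G μ σ * (Dm i μ α * L i σ))
          = (∑ σ, G μ σ * L i σ) * Dm i μ α := by
            rw [Finset.sum_mul]; exact Finset.sum_congr rfl fun σ _ => by ring
        _ = Li i μ * Dm i μ α := by rw [hcontr i μ]
    rw [split, hVU, hU]; ring
  rw [hT1]; ring

lemma trace_christoffel {n : ℕ} (lam laminv : Pt n → Fin n → Fin n → ℝ)
    (hlam_diff : ∀ i μ, ContDiff ℝ 1 (fun x => lam x i μ))
    (hlam_inv' : ∀ x i j, (∑ μ, lam x i μ * laminv x j μ) = if i = j then (1:ℝ) else 0)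
    (x : Pt n) (α : Fin n) :
    (∑ μ, christoffel (tetMetric lam) (tetMetricInv laminv) x μ μ α)
      = ∑ μ, weitzenbock lam laminv x μ μ α := by
  have hcontr : ∀ i μ, (∑ σ, tetMetricInv laminv x μ σ * lam x i σ) = laminv x i μ :=
    fun i μ => contract_ginv lam laminv hlam_inv' x i μ
  have hGsym : ∀ a c, tetMetricInv laminv x a c = tetMetricInv laminv x c a :=
    fun a c => Finset.sum_congr rfl fun i _ => mul_comm _ _
  simp only [christoffel, weitzenbock, pd_tetMetric lam hlam_diff]
  exact alg_trace (fun a c => tetMetricInv laminv x a c) (fun i a => lam x i a)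
    (fun i a => laminv x i a) (fun i a c => pd (fun y => lam y i a) c x) α hGsym hcontr

lemma alg_S {n : ℕ} (L Li Dm Nc Ee : Fin n → Fin n → ℝ)
    (hdelta : ∀ a c, (∑ i, L i a * Li i c) = if a = c then (1:ℝ) else 0) :
    (∑ i, ∑ μ, (Dm i μ - ∑ α, L i α * Nc α μ) * (-(∑ α, Ee μ α * Li i α)))
      = -(∑ μ, ∑ α, Ee μ α * (∑ i, Li i α * Dm i μ))
        + ∑ μ, ∑ α, Ee μ α * Nc α μ := by
  have expand : ∀ i μ, (Dm i μ - ∑ α, L i α * Nc α μ) * (-(∑ α, Ee μ α * Li i α))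
      = -(∑ β, Dm i μ * (Ee μ β * Li i β))
        + ∑ α, ∑ β, L i α * Li i β * (Nc α μ * Ee μ β) := by
    intro i μ
    rw [← Finset.mul_sum]
    have h2 : (∑ α, ∑ β, L i α * Li i β * (Nc α μ * Ee μ β))
        = (∑ α, L i α * Nc α μ) * (∑ β, Ee μ β * Li i β) := by
      rw [Finset.sum_mul]
      refine Finset.sum_congr rfl fun a _ => ?_
      rw [Finset.mul_sum]
      exact Finset.sum_congr rfl fun c _ => by ring
    rw [h2]; ring
  simp only [expand]
  simp only [Finset.sum_add_distrib, Finset.sum_neg_distrib]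
  congr 1
  · congr 1
    rw [Finset.sum_comm]
    refine Finset.sum_congr rfl fun μ _ => ?_
    rw [Finset.sum_comm]
    refine Finset.sum_congr rfl fun β _ => ?_
    rw [Finset.mul_sum]
    exact Finset.sum_congr rfl fun i _ => by ring
  · rw [Finset.sum_comm]
    refine Finset.sum_congr rfl fun μ _ => ?_
    rw [alg_delta L Li hdelta (fun a c => Nc a μ * Ee μ c)]
    exact Finset.sum_congr rfl fun α _ => mul_comm _ _

/-- the variational identity `E^μ_{ν∥⁻μ} + λ_{iμ∥⁺ν} J_i^μ = 0` with
`J_i^μ = −E^μ_α λ_i^α` implies the AP differential identity `E^μ_{ν|⁻μ} = 0`, where `|⁻`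
refers to the dual of the Weitzenböck connection. -/
theorem stmt16 {n : ℕ} (hn : 1 ≤ n)
    (lam laminv : Pt n → Fin n → Fin n → ℝ)
    (hlam_diff : ∀ i μ, ContDiff ℝ 1 (fun x => lam x i μ))
    (hlam_inv : ∀ x μ ν, (∑ i, lam x i μ * laminv x i ν) = if μ = ν then (1:ℝ) else 0)
    (hlam_inv' : ∀ x i j, (∑ μ, lam x i μ * laminv x j μ) = if i = j then (1:ℝ) else 0)
    (b : ℝ)
    (E : Tensor2 n)
    (hE_diff : ∀ μ ν, Differentiable ℝ (fun x => E x μ ν))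
    (hvar : ∀ (x : Pt n) (ν : Fin n),
      covDivDual (fun x α μ ν =>
          christoffel (tetMetric lam) (tetMetricInv laminv) x α μ ν
            + b * contortion lam laminv x α μ ν) E ν x
        + (∑ i, ∑ μ,
            (pd (fun y => lam y i μ) ν x
              - ∑ α, lam x i α *
                  (christoffel (tetMetric lam) (tetMetricInv laminv) x α μ ν
                    + b * contortion lam laminv x α μ ν))
            * (-(∑ α, E x μ α * laminv x i α))) = 0)
 :
    ∀ (x : Pt n) (ν : Fin n),
      covDivDual (weitzenbock lam laminv) E ν x = 0 := by

  intro x ν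
  have hS : (∑ i, ∑ μ,
      (pd (fun y => lam y i μ) ν x
        - ∑ α, lam x i α *
            (christoffel (tetMetric lam) (tetMetricInv laminv) x α μ ν
              + b * contortion lam laminv x α μ ν))
      * (-(∑ α, E x μ α * laminv x i α)))
    = -(∑ μ, ∑ α, E x μ α * (∑ i, laminv x i α * pd (fun y => lam y i μ) ν x))
      + ∑ μ, ∑ α, E x μ α *
          (christoffel (tetMetric lam) (tetMetricInv laminv) x α μ ν
            + b * contortion lam laminv x α μ ν) :=
    alg_S (fun i a => lam x i a) (fun i a => laminv x i a)
      (fun i μ => pd (fun y => lam y i μ) ν x)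
      (fun α μ => christoffel (tetMetric lam) (tetMetricInv laminv) x α μ ν
        + b * contortion lam laminv x α μ ν)
      (fun μ α => E x μ α)
      (fun a c => hlam_inv x a c)
  have htr : ∀ a : Fin n, (∑ μ, christoffel (tetMetric lam) (tetMetricInv laminv) x μ μ a)
      = ∑ μ, weitzenbock lam laminv x μ μ a :=
    fun a => trace_christoffel lam laminv hlam_diff hlam_inv' x a
  have htr' : ∀ a : Fin n, (∑ μ, (christoffel (tetMetric lam) (tetMetricInv laminv) x μ μ a
        + b * contortion lam laminv x μ μ a))
      = ∑ μ, weitzenbock lam laminv x μ μ a := by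
    intro a
    simp only [contortion]
    rw [Finset.sum_add_distrib, ← Finset.mul_sum, Finset.sum_sub_distrib, htr a]
    ring
  have hswap : ∀ f g : Fin n → Fin n → ℝ, (∀ a, (∑ μ, f μ a) = ∑ μ, g μ a) →
      (∑ μ, ∑ α, E x α ν * f μ α) = ∑ μ, ∑ α, E x α ν * g μ α := by
    intro f g h
    rw [Finset.sum_comm]
    conv_rhs => rw [Finset.sum_comm]
    refine Finset.sum_congr rfl fun a _ => ?_
    rw [← Finset.mul_sum, ← Finset.mul_sum, h a]
  have hNtr : (∑ μ, ∑ α, E x α ν *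
        (christoffel (tetMetric lam) (tetMetricInv laminv) x μ μ α
          + b * contortion lam laminv x μ μ α))
      = ∑ μ, ∑ α, E x α ν * weitzenbock lam laminv x μ μ α :=
    hswap _ _ htr'
  have hv := hvar x ν
  simp only [covDivDual] at hv ⊢
  rw [hS, hNtr] at hv
  simp only [weitzenbock] at hv ⊢
  linarith [hv]
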